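/- Let d ≥ 2 and let P ⊆ ℝ^d be a d-dimensional centrally-symmetric lattice polytope with P°_ℤ = {0} and |P_ℤ| = 3^d. Let F be a facet of P with a lattice point x in its relative interior, and let u_F ∈ (ℚ^d)* be the outer normal of F normalized by u_F(F) = {1} and u_F(P) ⊆ (−∞,1]. Then P_ℤ is the disjoint union of F_ℤ, P_ℤ ∩ u_F^⊥, and −F_ℤ; the map y ↦ x + y induces bijections (−F_ℤ) → (P_ℤ ∩ u_F^⊥) and (P_ℤ ∩ u_F^⊥) → F_ℤ; and every vertex of P lies in F_ℤ ∪ (−F_ℤ). -/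

import Mathlib

open Set

noncomputable section

/-- Coordinatewise cast of an integer vector into `ℝ^d`. -/
def ic {d : ℕ} (v : Fin d → ℤ) : Fin d → ℝ := fun i => (v i : ℝ)

/-- `P_ℤ`: the set of lattice points of `ℤ^d` lying in `P`. -/
def latticePts {d : ℕ} (P : Set (Fin d → ℝ)) : Set (Fin d → ℤ) := {x | ic x ∈ P}

/-- `P°_ℤ`: the set of lattice points of `ℤ^d` lying in the relative interior of `P`. -/
def relintLatticePts {d : ℕ} (P : Set (Fin d → ℝ)) : Set (Fin d → ℤ) :=
  {x | ic x ∈ intrinsicInterior ℝ P}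

/-- `P` is a lattice polytope: the convex hull of finitely many points of `ℤ^d`. -/
def IsLatticePolytope {d : ℕ} (P : Set (Fin d → ℝ)) : Prop :=
  ∃ V : Finset (Fin d → ℤ), P = convexHull ℝ (ic '' ↑V)

/-- `F` is a face of the convex set `P`: a convex extreme subset of `P`. -/
def IsFaceOf {d : ℕ} (P F : Set (Fin d → ℝ)) : Prop :=
  IsExtreme ℝ P F ∧ Convex ℝ F

/-! ### Auxiliary lemmas -/

lemma ic_add {d : ℕ} (a b : Fin d → ℤ) : ic (a + b) = ic a + ic b := by
  funext i; simp [ic]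

lemma ic_sub {d : ℕ} (a b : Fin d → ℤ) : ic (a - b) = ic a - ic b := by
  funext i; simp [ic]

lemma ic_neg {d : ℕ} (a : Fin d → ℤ) : ic (-a) = -ic a := by
  funext i; simp [ic]

lemma ic_zero {d : ℕ} : ic (0 : Fin d → ℤ) = 0 := by
  funext i; simp [ic]

lemma ic_inj {d : ℕ} {a b : Fin d → ℤ} (h : ic a = ic b) : a = b := by
  funext i
  have : (a i : ℝ) = (b i : ℝ) := congrFun h i
  exact_mod_cast this

lemma intrinsicInterior_eq_interior_of_top {d : ℕ} {s : Set (Fin d → ℝ)}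
    (h : affineSpan ℝ s = ⊤) : intrinsicInterior ℝ s = interior s := by
  apply Subset.antisymm _ interior_subset_intrinsicInterior
  rintro p ⟨y, hy, rfl⟩
  have hopens : IsOpen ((affineSpan ℝ s : Set (Fin d → ℝ))) := by
    rw [h]; simp only [AffineSubspace.top_coe]; exact isOpen_univ
  have hmap : IsOpenMap (Subtype.val : ↥(affineSpan ℝ s) → (Fin d → ℝ)) :=
    hopens.isOpenMap_subtype_val
  have himg := hmap _ (isOpen_interior (s := (Subtype.val ⁻¹' s : Set ↥(affineSpan ℝ s))))
  have hsub : (Subtype.val '' interior (Subtype.val ⁻¹' s : Set ↥(affineSpan ℝ s))) ⊆ s := by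
    rintro q ⟨w, hw, rfl⟩
    have hmem : w ∈ (Subtype.val ⁻¹' s : Set ↥(affineSpan ℝ s)) := interior_subset hw
    exact hmem
  exact interior_maximal hsub himg ⟨y, hy, rfl⟩

/-- The linear functional `p ↦ ∑ i, u i * p i`. -/
noncomputable def mkL {d : ℕ} (u : Fin d → ℚ) : (Fin d → ℝ) →ₗ[ℝ] ℝ where
  toFun := fun p => ∑ i, (u i : ℝ) * p i
  map_add' := by
    intro p q
    simp [Pi.add_apply, mul_add, Finset.sum_add_distrib]
  map_smul' := by
    intro c p
    simp [Finset.mul_sum, smul_eq_mul]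
    apply Finset.sum_congr rfl
    intro i _
    ring

lemma extreme_level {d : ℕ} {P : Set (Fin d → ℝ)} (f : (Fin d → ℝ) →ₗ[ℝ] ℝ) (c : ℝ)
    (hle : ∀ p ∈ P, f p ≤ c) : IsExtreme ℝ P {p | p ∈ P ∧ f p = c} := by
  constructor
  · exact fun p hp => hp.1
  · rintro x₁ h₁ x₂ h₂ z hz ⟨a, b, ha, hb, hab, rfl⟩
    have e : a * f x₁ + b * f x₂ = c := by
      have := hz.2
      simpa [map_add, map_smul, smul_eq_mul] using this
    have l1 := hle _ h₁
    have l2 := hle _ h₂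
    have key : a * c + b * c = c := by rw [← add_mul, hab, one_mul]
    have e1 : f x₁ = c := by
      by_contra hne
      have h1 : a * f x₁ < a * c := mul_lt_mul_of_pos_left (lt_of_le_of_ne l1 hne) ha
      have h2 : b * f x₂ ≤ b * c := mul_le_mul_of_nonneg_left l2 hb.le
      linarith
    have e2 : f x₂ = c := by
      by_contra hne
      have h1 : b * f x₂ < b * c := mul_lt_mul_of_pos_left (lt_of_le_of_ne l2 hne) hb
      have h2 : a * f x₁ ≤ a * c := mul_le_mul_of_nonneg_left l1 ha.le
      linarith
    exact ⟨h₁, e1⟩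

lemma relint_extend {d : ℕ} {F : Set (Fin d → ℝ)} {xr : Fin d → ℝ}
    (hx : xr ∈ intrinsicInterior ℝ F) (g : Fin d → ℝ)
    (hg : g ∈ (affineSpan ℝ F : Set (Fin d → ℝ))) :
    ∃ p ∈ F, xr ∈ openSegment ℝ p g := by
  have hxF : xr ∈ F := intrinsicInterior_subset hx
  have hxA : xr ∈ affineSpan ℝ F := subset_affineSpan ℝ F hxF
  obtain ⟨y, hy, hyx⟩ := hx
  have hmemc : ∀ t : ℝ, xr + t • (xr - g) ∈ affineSpan ℝ F := by
    intro t
    have := AffineSubspace.smul_vsub_vadd_mem (affineSpan ℝ F) t hxA hg hxA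
    simpa [vsub_eq_sub, vadd_eq_add, add_comm] using this
  set c : ℝ → ↥(affineSpan ℝ F) := fun t => ⟨xr + t • (xr - g), hmemc t⟩ with hc
  have hcont : Continuous c := by
    apply Continuous.subtype_mk
    fun_prop
  have hc0 : c 0 = y := by
    apply Subtype.ext
    simp [hc, hyx]
  have hU : IsOpen (c ⁻¹' interior ((Subtype.val) ⁻¹' F : Set ↥(affineSpan ℝ F))) :=
    isOpen_interior.preimage hcont
  have h0U : (0:ℝ) ∈ c ⁻¹' interior ((Subtype.val) ⁻¹' F : Set ↥(affineSpan ℝ F)) := by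
    simp only [mem_preimage, hc0]; exact hy
  obtain ⟨ε, hε, hball⟩ := Metric.isOpen_iff.mp hU 0 h0U
  set t := ε/2 with ht
  have htpos : 0 < t := by positivity
  have htU : c t ∈ interior ((Subtype.val) ⁻¹' F : Set ↥(affineSpan ℝ F)) := by
    apply hball
    have : |t| < ε := by
      rw [abs_of_pos htpos, ht]; linarith
    simpa [Real.dist_eq] using this
  have hpF : xr + t • (xr - g) ∈ F := by
    have hmem : c t ∈ (Subtype.val ⁻¹' F : Set ↥(affineSpan ℝ F)) := interior_subset htU
    exact hmem
  refine ⟨xr + t • (xr - g), hpF, ?_⟩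
  refine ⟨1/(1+t), t/(1+t), by positivity, by positivity, ?_, ?_⟩
  · field_simp
  · have h1t : (1:ℝ) + t ≠ 0 := by positivity
    match_scalars <;> field_simp <;> ring

lemma lattice_finite {d : ℕ} {P : Set (Fin d → ℝ)} (hP : IsCompact P) :
    {z : Fin d → ℤ | ic z ∈ P}.Finite := by
  obtain ⟨R, hR⟩ := isBounded_iff_forall_norm_le.mp hP.isBounded
  apply Set.Finite.subset (Set.Finite.pi (fun i : Fin d => Set.finite_Icc (-⌈R⌉ : ℤ) ⌈R⌉))
  intro z hz
  rw [Set.mem_pi]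
  intro i _
  have h1 : ‖ic z i‖ ≤ ‖ic z‖ := norm_le_pi_norm (ic z) i
  have h2 : ‖ic z‖ ≤ R := hR _ hz
  have h3 : |(z i : ℝ)| ≤ R := by
    have he : ‖ic z i‖ = |(z i : ℝ)| := by simp [ic]
    linarith [he ▸ h1]
  have hceil : R ≤ (⌈R⌉ : ℝ) := Int.le_ceil R
  constructor
  · have : -(⌈R⌉:ℝ) ≤ (z i : ℝ) := by
      have := abs_le.mp h3
      linarith [this.1]
    exact_mod_cast this
  · have : (z i : ℝ) ≤ (⌈R⌉:ℝ) := by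
      have := abs_le.mp h3
      linarith [this.2]
    exact_mod_cast this

lemma mod3_surj {d : ℕ} {S : Set (Fin d → ℤ)} (hfin : S.Finite)
    (hcard : S.ncard = 3 ^ d)
    (hinj : Set.InjOn (fun z : Fin d → ℤ => fun i => ((z i : ZMod 3))) S)
    (a : Fin d → ℤ) :
    ∃ y ∈ S, (fun i => ((y i : ZMod 3))) = fun i => ((a i : ZMod 3)) := by
  classical
  set φ : (Fin d → ℤ) → (Fin d → ZMod 3) := fun z => fun i => ((z i : ZMod 3)) with hφ
  have himgcard : (φ '' S).ncard = 3 ^ d := by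
    rw [Set.ncard_image_of_injOn hinj, hcard]
  have hcardtype : Fintype.card (Fin d → ZMod 3) = 3 ^ d := by
    simp [Fintype.card_fun]
  have himgfin : (φ '' S).Finite := hfin.image φ
  have huniv : himgfin.toFinset = Finset.univ := by
    apply Finset.eq_univ_of_card
    rw [← Set.ncard_eq_toFinset_card _ himgfin, himgcard, hcardtype]
  have hmem : φ a ∈ φ '' S := by
    have : φ a ∈ himgfin.toFinset := by rw [huniv]; exact Finset.mem_univ _
    simpa using this
  obtain ⟨y, hyS, hy⟩ := hmem
  exact ⟨y, hyS, hy⟩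

set_option maxHeartbeats 3200000 in
/-- Let `P` be a `d`-dimensional (`d ≥ 2`) centrally-symmetric lattice polytope with
    `P°_ℤ = {0}` and `|P_ℤ| = 3^d`, let `F` be a facet of `P` with a lattice point `x`
    in its relative interior, and let `u_F` be the rational outer normal of `F` with
    `u_F(F) = {1}` and `u_F(P) ≤ 1`.  Then `P_ℤ` is the disjoint union of `F_ℤ`,
    `P_ℤ ∩ u_F^⊥` and `−F_ℤ`; translation by `x` induces bijections
    `−F_ℤ → P_ℤ ∩ u_F^⊥ → F_ℤ`; and every vertex of `P` lies in `F_ℤ ∪ (−F_ℤ)`. -/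
theorem facet_layer_structure {d : ℕ} (hd : 2 ≤ d) (P : Set (Fin d → ℝ))
    (hpoly : IsLatticePolytope P) (hdim : affineSpan ℝ P = ⊤)
    (hsym : P = -P) (hint : relintLatticePts P = {0})
    (hcard : (latticePts P).ncard = 3 ^ d)
    (F : Set (Fin d → ℝ)) (hF : IsFaceOf P F)
    (hfacet : Module.finrank ℝ (vectorSpan ℝ F) = d - 1)
    (x : Fin d → ℤ) (hx : ic x ∈ intrinsicInterior ℝ F)
    (u : Fin d → ℚ)
    (huF : ∀ p ∈ F, ∑ i, (u i : ℝ) * p i = 1)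
    (huP : ∀ p ∈ P, ∑ i, (u i : ℝ) * p i ≤ 1) :
    latticePts P =
        latticePts F ∪ {y ∈ latticePts P | ∑ i, (u i : ℝ) * (y i : ℝ) = 0} ∪
          (-(latticePts F)) ∧
    Disjoint (latticePts F) {y ∈ latticePts P | ∑ i, (u i : ℝ) * (y i : ℝ) = 0} ∧
    Disjoint {y ∈ latticePts P | ∑ i, (u i : ℝ) * (y i : ℝ) = 0} (-(latticePts F)) ∧
    Disjoint (latticePts F) (-(latticePts F)) ∧
    Set.BijOn (fun y => x + y) (-(latticePts F))
      {y ∈ latticePts P | ∑ i, (u i : ℝ) * (y i : ℝ) = 0} ∧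
    Set.BijOn (fun y => x + y)
      {y ∈ latticePts P | ∑ i, (u i : ℝ) * (y i : ℝ) = 0} (latticePts F) ∧
    ∀ p ∈ Set.extremePoints ℝ P, (∃ z : Fin d → ℤ, ic z = p) ∧ (p ∈ F ∨ -p ∈ F) := by
  classical
  obtain ⟨V, hV⟩ := hpoly
  have hPconv : Convex ℝ P := hV ▸ convex_convexHull ℝ _
  have hPcpt : IsCompact P := by
    rw [hV]
    exact (((V : Set (Fin d → ℤ)).toFinite.image ic)).isCompact_convexHull ℝ
  have hSfin : (latticePts P).Finite := lattice_finite hPcpt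
  set L : (Fin d → ℝ) →ₗ[ℝ] ℝ := mkL u with hLdef
  have hLy : ∀ y : Fin d → ℤ, L (ic y) = ∑ i, (u i:ℝ) * (y i:ℝ) := fun _ => rfl
  have huF' : ∀ p ∈ F, L p = 1 := huF
  have huP' : ∀ p ∈ P, L p ≤ 1 := huP
  have hII : intrinsicInterior ℝ P = interior P := intrinsicInterior_eq_interior_of_top hdim
  have h0P : (0 : Fin d → ℝ) ∈ interior P := by
    have h0 : (0 : Fin d → ℤ) ∈ relintLatticePts P := by rw [hint]; rfl
    have h0' : ic (0 : Fin d → ℤ) ∈ intrinsicInterior ℝ P := h0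
    rwa [ic_zero, hII] at h0'
  have hIntLat : ∀ z : Fin d → ℤ, ic z ∈ interior P → z = 0 := by
    intro z hz
    have : z ∈ relintLatticePts P := by
      show ic z ∈ intrinsicInterior ℝ P
      rwa [hII]
    rwa [hint, mem_singleton_iff] at this
  have hnegP : ∀ p ∈ P, -p ∈ P := by
    intro p hp
    rw [hsym]
    exact Set.neg_mem_neg.mpr hp
  have hnegS : ∀ y ∈ latticePts P, -y ∈ latticePts P := by
    intro y hy
    show ic (-y) ∈ P
    rw [ic_neg]
    exact hnegP _ hy
  have hxF : ic x ∈ F := intrinsicInterior_subset hx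
  have hFP : F ⊆ P := hF.1.1
  have hxP : ic x ∈ P := hFP hxF
  have hxS : x ∈ latticePts P := hxP
  have hLx : L (ic x) = 1 := huF' _ hxF
  -- mod 3 injectivity
  set φ : (Fin d → ℤ) → (Fin d → ZMod 3) := fun z => fun i => ((z i : ZMod 3)) with hφ
  have hinj : Set.InjOn φ (latticePts P) := by
    intro y hy z hz he
    have hdvd : ∀ i, ∃ c : ℤ, y i - z i = 3 * c := by
      intro i
      have hei : ((y i : ZMod 3)) = ((z i : ZMod 3)) := congrFun he i
      have h0 : ((y i - z i : ℤ) : ZMod 3) = 0 := by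
        push_cast
        rw [hei]
        ring
      obtain ⟨c, hc⟩ := (ZMod.intCast_zmod_eq_zero_iff_dvd _ 3).mp h0
      exact ⟨c, hc⟩
    choose w hw using hdvd
    have hicw : ic w = (1/3 : ℝ) • (0 : Fin d → ℝ) +
        (2/3 : ℝ) • ((1/2:ℝ) • ic y + (1/2:ℝ) • (-(ic z))) := by
      funext i
      have := hw i
      have hcast : (y i : ℝ) - (z i : ℝ) = 3 * (w i : ℝ) := by exact_mod_cast this
      simp only [ic, Pi.add_apply, Pi.smul_apply, Pi.neg_apply, Pi.zero_apply, smul_eq_mul]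
      linarith
    have hm : ((1/2:ℝ) • ic y + (1/2:ℝ) • (-(ic z))) ∈ P :=
      hPconv hy (hnegP _ hz) (by norm_num) (by norm_num) (by norm_num)
    have hwint : ic w ∈ interior P := by
      rw [hicw]
      exact hPconv.combo_interior_self_mem_interior h0P hm (by norm_num) (by norm_num)
        (by norm_num)
    have hw0 : w = 0 := hIntLat _ hwint
    funext i
    have := hw i
    rw [hw0] at this
    simp at this
    omega
  have hsurj : ∀ a : Fin d → ℤ, ∃ y ∈ latticePts P, φ y = φ a :=
    fun a => mod3_surj hSfin hcard hinj a
  -- capture lemma: points of P on the level set through x of a functional maximized oppositely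
  have hextend : ∀ g ∈ (affineSpan ℝ F : Set (Fin d → ℝ)), ∃ p ∈ F, ic x ∈ openSegment ℝ p g :=
    fun g hg => relint_extend hx g hg
  have hFabsorb : ∀ K : Set (Fin d → ℝ), IsExtreme ℝ P K → ic x ∈ K → F ⊆ K := by
    intro K hK hxK f hf
    obtain ⟨p, hp, hseg⟩ := hextend f (subset_affineSpan ℝ F hf)
    exact hK.2 (hFP hf) (hFP hp) hxK (by rwa [openSegment_symm])
  have hCAP : ∀ (f₀ : (Fin d → ℝ) →ₗ[ℝ] ℝ) (κ : ℝ), κ ≠ 0 → (∀ p ∈ P, f₀ p ≤ κ) →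
      f₀ (ic x) = κ → ∀ g ∈ P, f₀ g = κ → g ∈ F := by
    intro f₀ κ hκ hle hxκ g hgP hgκ
    have hKext := extreme_level f₀ κ hle
    have hFK : F ⊆ {p | p ∈ P ∧ f₀ p = κ} := hFabsorb _ hKext ⟨hxP, hxκ⟩
    have hrange : LinearMap.range f₀ = ⊤ := by
      rw [LinearMap.range_eq_top]
      intro r
      refine ⟨(r/κ) • ic x, ?_⟩
      rw [map_smul, hxκ, smul_eq_mul]
      field_simp
    have hfinker : Module.finrank ℝ (LinearMap.ker f₀) = d - 1 := by
      have h1 := LinearMap.finrank_range_add_finrank_ker f₀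
      rw [hrange] at h1
      have h2 : Module.finrank ℝ (Fin d → ℝ) = d := by
        simp [Module.finrank_fintype_fun_eq_card]
      have h3 : Module.finrank ℝ (⊤ : Submodule ℝ ℝ) = 1 := by
        simp [finrank_top]
      rw [h2, h3] at h1
      omega
    have hdir : vectorSpan ℝ F ≤ LinearMap.ker f₀ := by
      rw [vectorSpan_def, Submodule.span_le]
      rintro v ⟨p, hp, q, hq, rfl⟩
      have hpv : f₀ p = κ := (hFK hp).2
      have hqv : f₀ q = κ := (hFK hq).2
      simp [LinearMap.mem_ker, vsub_eq_sub, map_sub, hpv, hqv, SetLike.mem_coe]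
    have hdeq : vectorSpan ℝ F = LinearMap.ker f₀ :=
      Submodule.eq_of_le_of_finrank_eq hdir (by rw [hfacet, hfinker])
    have hgA : g ∈ (affineSpan ℝ F : Set (Fin d → ℝ)) := by
      have hv : g - ic x ∈ (affineSpan ℝ F).direction := by
        rw [direction_affineSpan, hdeq]
        simp [LinearMap.mem_ker, map_sub, hgκ, hxκ]
      have hmem := AffineSubspace.vadd_mem_of_mem_direction hv (subset_affineSpan ℝ F hxF)
      have heq : (g - ic x) +ᵥ ic x = g := by
        rw [vadd_eq_add]; ring
      rwa [heq] at hmem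
    obtain ⟨p, hp, hseg⟩ := hextend g hgA
    exact hF.1.2 hgP (hFP hp) hxF (by rwa [openSegment_symm])
  have hFeq : ∀ g ∈ P, L g = 1 → g ∈ F :=
    fun g hg hg1 => hCAP L 1 one_ne_zero huP' hLx g hg hg1
  -- the key dichotomy
  have hkey : ∀ y ∈ latticePts P, ic y ∉ F → y + x ∈ latticePts P := by
    intro y hy hyF
    obtain ⟨z, hz, hze⟩ := hsurj (y + x)
    have hdvd : ∀ i, ∃ c : ℤ, z i - y i - x i = 3 * c := by
      intro i
      have hei : ((z i : ZMod 3)) = (((y + x) i : ZMod 3)) := congrFun hze i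
      have h0 : ((z i - y i - x i : ℤ) : ZMod 3) = 0 := by
        push_cast
        push_cast [Pi.add_apply] at hei
        rw [hei]
        ring
      obtain ⟨c, hc⟩ := (ZMod.intCast_zmod_eq_zero_iff_dvd _ 3).mp h0
      exact ⟨c, hc⟩
    choose w hw using hdvd
    by_cases hw0 : w = 0
    · have hzyx : z = y + x := by
        funext i
        have := hw i
        rw [hw0] at this
        simp at this
        simp [Pi.add_apply]
        omega
      rwa [← hzyx]
    · exfalso
      -- w is a nonzero lattice point of P
      have hicw : ic w = (1/3 : ℝ) • ic z +
          (2/3 : ℝ) • ((1/2:ℝ) • (-(ic y)) + (1/2:ℝ) • (-(ic x))) := by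
        funext i
        have := hw i
        have hcast : (z i : ℝ) - (y i : ℝ) - (x i : ℝ) = 3 * (w i : ℝ) := by exact_mod_cast this
        simp only [ic, Pi.add_apply, Pi.smul_apply, Pi.neg_apply, smul_eq_mul]
        linarith
      have hm : ((1/2:ℝ) • (-(ic y)) + (1/2:ℝ) • (-(ic x))) ∈ P :=
        hPconv (hnegP _ hy) (hnegP _ hxP) (by norm_num) (by norm_num) (by norm_num)
      have hwP : ic w ∈ P := by
        rw [hicw]
        exact hPconv hz hm (by norm_num) (by norm_num) (by norm_num)
      have hwnotint : ic w ∉ interior P := fun h => hw0 (hIntLat _ h)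
      obtain ⟨f, hf⟩ := geometric_hahn_banach_open_point hPconv.interior isOpen_interior hwnotint
      set cc := f (ic w) with hcc
      have hcpos : 0 < cc := by
        have := hf 0 h0P
        simpa using this
      have hfle : ∀ p ∈ P, f p ≤ cc := by
        intro p hp
        by_contra hgt
        push_neg at hgt
        have hfp : 0 < f p := lt_trans hcpos hgt
        set a := (cc / f p + 1)/2 with ha
        have hq1 : cc / f p < 1 := (div_lt_one hfp).mpr hgt
        have hq0 : 0 < cc / f p := div_pos hcpos hfp
        have ha1 : a < 1 := by rw [ha]; linarith
        have ha0 : 0 < a := by rw [ha]; linarith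
        have hmem : a • p + (1-a) • (0 : Fin d → ℝ) ∈ interior P :=
          hPconv.combo_self_interior_mem_interior hp h0P ha0.le (by linarith) (by ring)
        have hlt := hf _ hmem
        have hval : f (a • p + (1-a) • (0 : Fin d → ℝ)) = a * f p := by
          rw [map_add, map_smul, map_smul]
          simp
        rw [hval] at hlt
        have : a * f p = (cc + f p)/2 := by
          rw [ha]
          field_simp
        rw [this] at hlt
        linarith
      have hsum3 : f (ic z) + f (-(ic y)) + f (-(ic x)) = 3 * cc := by
        have : f (ic w) = (1/3) * f (ic z) + (1/3) * f (-(ic y)) + (1/3) * f (-(ic x)) := by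
          rw [hicw]
          simp only [map_add, map_smul, smul_eq_mul]
          ring
        rw [← hcc] at this
        linarith
      have h1 := hfle _ hz
      have h2 := hfle _ (hnegP _ hy)
      have h3 := hfle _ (hnegP _ hxP)
      have heq2 : f (-(ic y)) = cc := by linarith
      have heq3 : f (-(ic x)) = cc := by linarith
      -- apply capture with -f
      have hfneg : ∀ q : Fin d → ℝ,
          ((-(ContinuousLinearMap.toLinearMap f)) q) = - f q := fun q => rfl
      refine hyF (hCAP (-(ContinuousLinearMap.toLinearMap f)) cc (ne_of_gt hcpos) ?_ ?_
        (ic y) hy ?_)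
      · intro p hp
        have h4 := hfle _ (hnegP _ hp)
        rw [map_neg] at h4
        rw [hfneg]
        linarith
      · rw [hfneg]
        rw [map_neg] at heq3
        linarith
      · rw [hfneg]
        rw [map_neg] at heq2
        linarith
  -- basic consequences
  have hLneg : ∀ q : Fin d → ℝ, L (-q) = - L q := fun q => map_neg L q
  have hstep : ∀ y ∈ latticePts P, ic y ∉ F →
      (y + x) ∈ latticePts P ∧ L (ic (y + x)) = L (ic y) + 1 := by
    intro y hy hyF
    refine ⟨hkey y hy hyF, ?_⟩
    rw [ic_add, map_add, hLx]
  have hFS : latticePts F ⊆ latticePts P := fun y hy => hFP hy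
  have hval : ∀ y ∈ latticePts P, L (ic y) = 1 ∨ L (ic y) = 0 ∨ L (ic y) = -1 := by
    intro y hy
    by_cases h1 : ic y ∈ F
    · exact Or.inl (huF' _ h1)
    · have hle0 : L (ic y) ≤ 0 := by
        obtain ⟨hs, he⟩ := hstep y hy h1
        have := huP' _ hs
        linarith
      by_cases h2 : ic (-y) ∈ F
      · refine Or.inr (Or.inr ?_)
        have h3 := huF' _ h2
        rw [ic_neg, hLneg] at h3
        linarith
      · have hge0 : 0 ≤ L (ic y) := by
          obtain ⟨hs, he⟩ := hstep (-y) (hnegS y hy) h2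
          have h4 := huP' _ hs
          rw [ic_neg, hLneg] at he
          linarith
        exact Or.inr (Or.inl (le_antisymm hle0 hge0))
  have hchar1 : ∀ y : Fin d → ℤ, y ∈ latticePts F ↔ (y ∈ latticePts P ∧ L (ic y) = 1) := by
    intro y
    constructor
    · intro hyF
      exact ⟨hFS hyF, huF' _ hyF⟩
    · rintro ⟨hyP, hy1⟩
      exact hFeq _ hyP hy1
  have hcharN : ∀ y : Fin d → ℤ, y ∈ -(latticePts F) ↔
      (y ∈ latticePts P ∧ L (ic y) = -1) := by
    intro y
    rw [Set.mem_neg, hchar1 (-y)]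
    constructor
    · rintro ⟨hyP, hy1⟩
      have hyP' : y ∈ latticePts P := by
        have := hnegS _ hyP
        simpa [neg_neg] using this
      refine ⟨hyP', ?_⟩
      rw [ic_neg, hLneg] at hy1
      linarith
    · rintro ⟨hyP, hy1⟩
      refine ⟨hnegS _ hyP, ?_⟩
      rw [ic_neg, hLneg, hy1]
      ring
  have hmidchar : ∀ y : Fin d → ℤ,
      y ∈ {y ∈ latticePts P | ∑ i, (u i : ℝ) * (y i : ℝ) = 0} ↔
      (y ∈ latticePts P ∧ L (ic y) = 0) := fun y => Iff.rfl
  have hnotF_of_ne : ∀ y : Fin d → ℤ, y ∈ latticePts P → L (ic y) ≠ 1 → ic y ∉ F := by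
    intro y hy hne hmem
    exact hne (huF' _ hmem)
  refine ⟨?_, ?_, ?_, ?_, ?_, ?_, ?_⟩
  · -- partition
    ext y
    simp only [Set.mem_union]
    constructor
    · intro hy
      rcases hval y hy with h|h|h
      · exact Or.inl (Or.inl ((hchar1 y).mpr ⟨hy, h⟩))
      · exact Or.inl (Or.inr ((hmidchar y).mpr ⟨hy, h⟩))
      · exact Or.inr ((hcharN y).mpr ⟨hy, h⟩)
    · intro hy
      rcases hy with (h|h)|h
      · exact hFS h
      · exact ((hmidchar y).mp h).1
      · exact ((hcharN y).mp h).1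
  · rw [Set.disjoint_left]
    intro y h1 h2
    have e1 := ((hchar1 y).mp h1).2
    have e2 := ((hmidchar y).mp h2).2
    rw [e1] at e2
    norm_num at e2
  · rw [Set.disjoint_left]
    intro y h1 h2
    have e1 := ((hmidchar y).mp h1).2
    have e2 := ((hcharN y).mp h2).2
    rw [e1] at e2
    norm_num at e2
  · rw [Set.disjoint_left]
    intro y h1 h2
    have e1 := ((hchar1 y).mp h1).2
    have e2 := ((hcharN y).mp h2).2
    rw [e1] at e2
    norm_num at e2
  · -- bijection -F → middle
    refine ⟨?_, ?_, ?_⟩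
    · intro y hy
      obtain ⟨hyP, hym⟩ := (hcharN y).mp hy
      have hynF : ic y ∉ F := hnotF_of_ne y hyP (by rw [hym]; norm_num)
      obtain ⟨hs, he⟩ := hstep y hyP hynF
      show x + y ∈ {y ∈ latticePts P | ∑ i, (u i : ℝ) * (y i : ℝ) = 0}
      rw [add_comm x y]
      refine (hmidchar _).mpr ⟨hs, ?_⟩
      rw [he, hym]
      ring
    · intro a _ b _ h
      simpa using add_left_cancel (h : x + a = x + b)
    · intro z hz
      obtain ⟨hzP, hz0⟩ := (hmidchar z).mp hz
      have hnz : -z ∈ latticePts P := hnegS _ hzP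
      have hnzF : ic (-z) ∉ F := by
        apply hnotF_of_ne _ hnz
        rw [ic_neg, hLneg, hz0]
        norm_num
      obtain ⟨hs, he⟩ := hstep (-z) hnz hnzF
      have hrw : z - x = -(-z + x) := by ring
      refine ⟨z - x, ?_, ?_⟩
      · refine (hcharN _).mpr ⟨?_, ?_⟩
        · rw [hrw]
          exact hnegS _ hs
        · rw [hrw, ic_neg, hLneg, he, ic_neg, hLneg, hz0]
          ring
      · show x + (z - x) = z
        ring
  · -- bijection middle → F
    refine ⟨?_, ?_, ?_⟩
    · intro y hy
      obtain ⟨hyP, hym⟩ := (hmidchar y).mp hy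
      have hynF : ic y ∉ F := hnotF_of_ne y hyP (by rw [hym]; norm_num)
      obtain ⟨hs, he⟩ := hstep y hyP hynF
      show x + y ∈ latticePts F
      rw [add_comm x y]
      refine (hchar1 _).mpr ⟨hs, ?_⟩
      rw [he, hym]
      ring
    · intro a _ b _ h
      simpa using add_left_cancel (h : x + a = x + b)
    · intro z hz
      obtain ⟨hzP, hz1⟩ := (hchar1 z).mp hz
      have hnz : -z ∈ latticePts P := hnegS _ hzP
      have hnzF : ic (-z) ∉ F := by
        apply hnotF_of_ne _ hnz
        rw [ic_neg, hLneg, hz1]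
        norm_num
      obtain ⟨hs, he⟩ := hstep (-z) hnz hnzF
      have hrw : z - x = -(-z + x) := by ring
      refine ⟨z - x, ?_, ?_⟩
      · refine (hmidchar _).mpr ⟨?_, ?_⟩
        · rw [hrw]
          exact hnegS _ hs
        · rw [hrw, ic_neg, hLneg, he, ic_neg, hLneg, hz1]
          ring
      · show x + (z - x) = z
        ring
  · -- vertices
    intro p hp
    have hpP : p ∈ P := extremePoints_subset hp
    have hp' := hp
    rw [hV] at hp'
    have hpV : p ∈ ic '' (V : Set (Fin d → ℤ)) := extremePoints_convexHull_subset hp'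
    obtain ⟨z, hzV, rfl⟩ := hpV
    have hzS : z ∈ latticePts P := hpP
    refine ⟨⟨z, rfl⟩, ?_⟩
    rcases hval z hzS with h|h|h
    · exact Or.inl (hFeq _ hpP h)
    · exfalso
      have hznF : ic z ∉ F := hnotF_of_ne _ hzS (by rw [h]; norm_num)
      obtain ⟨hs1, he1⟩ := hstep z hzS hznF
      have hnzF : ic (-z) ∉ F := by
        apply hnotF_of_ne _ (hnegS _ hzS)
        rw [ic_neg, hLneg, h]
        norm_num
      obtain ⟨hs2, he2⟩ := hstep (-z) (hnegS _ hzS) hnzF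
      have hzmx : z - x ∈ latticePts P := by
        have hrw : z - x = -(-z + x) := by ring
        rw [hrw]
        exact hnegS _ hs2
      have hseg : ic z ∈ openSegment ℝ (ic (z - x)) (ic (z + x)) := by
        refine ⟨1/2, 1/2, by norm_num, by norm_num, by norm_num, ?_⟩
        rw [ic_sub, ic_add]
        module
      have hmem1 : ic (z - x) ∈ P := hzmx
      have hmem2 : ic (z + x) ∈ P := hs1
      have heq := ((mem_extremePoints.mp hp).2 _ hmem1 _ hmem2 hseg).1
      have h1 := ic_inj heq
      have hx0 : x = 0 := by
        funext i
        have h2 := congrFun h1 i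
        simp only [Pi.sub_apply] at h2
        simp only [Pi.zero_apply]
        omega
      rw [hx0, ic_zero, map_zero] at hLx
      norm_num at hLx
    · refine Or.inr ?_
      have hrw : -ic z = ic (-z) := (ic_neg z).symm
      rw [hrw]
      apply hFeq _ (hnegS _ hzS)
      rw [ic_neg, hLneg, h]
      ring
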